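/- Let A = ⟨α₀, α∞, {A_σ}⟩ be an SVA (singular value automaton) with n states for f ∈ ℓ¹(Σ*) with Hankel singular values 𝔰₁ ≥ ⋯ ≥ 𝔰ₙ > 0. Then for all j ∈ [n]: ∑_{i=1}^n 𝔰ᵢ ∑_{σ∈Σ} A_σ(i,j)² = 𝔰ⱼ − α₀(j)². -/

import Mathlib

open Matrix

/-- the forward SVA equations. Let `A` be an SVA with `n` states
for `f ∈ ℓ¹` with Hankel singular values `𝔰₁ ≥ ⋯ ≥ 𝔰ₙ > 0`; equivalently, the
columns `p j` of the forward matrix (given by `p j λ = α₀ j` and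
`p j (xσ) = ∑ i, p i x * A σ i j`) are pairwise orthogonal in `ℓ²` with
`‖p j‖₂² = 𝔰ⱼ`.  Then for all `j`,
`∑ i, 𝔰ᵢ ∑ σ, A_σ(i,j)² = 𝔰ⱼ − α₀(j)²`. -/
theorem sva_forward_equations {Γ : Type*} [Fintype Γ] {n : ℕ}
    (α₀ : Fin n → ℝ) (A : Γ → Matrix (Fin n) (Fin n) ℝ)
    (s : Fin n → ℝ) (hpos : ∀ i, 0 < s i)
    (hmono : ∀ i j : Fin n, i ≤ j → s j ≤ s i)
    (p : Fin n → List Γ → ℝ)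
    (hnil : ∀ j, p j [] = α₀ j)
    (hstep : ∀ (j : Fin n) (x : List Γ) (σ : Γ),
      p j (x ++ [σ]) = ∑ i, p i x * A σ i j)
    (horth : ∀ i j : Fin n,
      HasSum (fun x : List Γ => p i x * p j x) (if i = j then s i else 0)) :
    ∀ j : Fin n, ∑ i, s i * ∑ σ : Γ, (A σ i j) ^ 2 = s j - (α₀ j) ^ 2 := by
  intro j
  classical
  have h1 : HasSum (fun x : List Γ => p j x ^ 2) (s j) := by
    simpa [pow_two] using horth j j
  have hsingle : HasSum (fun x : List Γ => if x = ([] : List Γ) then p j [] ^ 2 else 0)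
      (p j [] ^ 2) := hasSum_ite_eq _ _
  have h2 : HasSum
      (fun x : List Γ => p j x ^ 2 - if x = ([] : List Γ) then p j [] ^ 2 else 0)
      (s j - p j [] ^ 2) := h1.sub hsingle
  set snoc : List Γ × Γ → List Γ := fun q => q.1 ++ [q.2] with hsnoc
  have hinj : Function.Injective snoc := by
    rintro ⟨x, σ⟩ ⟨y, τ⟩ h
    have h' := congrArg List.reverse h
    simp only [snoc, List.reverse_append, List.reverse_cons, List.reverse_nil,
      List.nil_append, List.singleton_append, List.cons.injEq] at h'
    obtain ⟨hστ, hxy⟩ := h'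
    have hx : x = y := by
      have := congrArg List.reverse hxy
      simpa using this
    simp [hx, hστ]
  have hrange : ∀ l : List Γ, l ∉ Set.range snoc →
      (p j l ^ 2 - if l = ([] : List Γ) then p j [] ^ 2 else 0) = 0 := by
    intro l hl
    rcases List.eq_nil_or_concat l with rfl | ⟨x, σ, rfl⟩
    · simp
    · exact absurd ⟨(x, σ), by simp [snoc]⟩ hl
  have h3 : HasSum (fun q : List Γ × Γ => p j (q.1 ++ [q.2]) ^ 2) (s j - p j [] ^ 2) := by
    have h := (hinj.hasSum_iff hrange).2 h2
    have hfe : ((fun l : List Γ => p j l ^ 2 - if l = ([] : List Γ) then p j [] ^ 2 else 0)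
        ∘ snoc) = fun q : List Γ × Γ => p j (q.1 ++ [q.2]) ^ 2 := by
      funext q
      simp [snoc]
    rwa [hfe] at h
  have h4 : HasSum (fun q : Γ × List Γ => p j (q.2 ++ [q.1]) ^ 2) (s j - p j [] ^ 2) := by
    have := ((Equiv.prodComm Γ (List Γ)).hasSum_iff
      (f := fun q : List Γ × Γ => p j (q.1 ++ [q.2]) ^ 2)).2 h3
    simpa [Function.comp_def] using this
  have hfiber : ∀ σ : Γ, HasSum (fun x : List Γ => p j (x ++ [σ]) ^ 2)
      (∑ i, ∑ k, A σ i j * A σ k j * (if i = k then s i else 0)) := by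
    intro σ
    have h : HasSum
        (fun x : List Γ => ∑ i, ∑ k, A σ i j * A σ k j * (p i x * p k x))
        (∑ i, ∑ k, A σ i j * A σ k j * (if i = k then s i else 0)) := by
      refine hasSum_sum fun i _ => hasSum_sum fun k _ => ?_
      exact (horth i k).mul_left _
    have heq : ∀ x : List Γ,
        p j (x ++ [σ]) ^ 2 = ∑ i, ∑ k, A σ i j * A σ k j * (p i x * p k x) := by
      intro x
      rw [hstep, pow_two, Finset.sum_mul_sum]
      refine Finset.sum_congr rfl fun i _ => Finset.sum_congr rfl fun k _ => by ring
    simpa only [heq] using h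
  have h5 : HasSum
      (fun σ : Γ => ∑ i, ∑ k, A σ i j * A σ k j * (if i = k then s i else 0))
      (s j - p j [] ^ 2) := h4.prod_fiberwise hfiber
  have h6 : ∑ σ : Γ, ∑ i, ∑ k, A σ i j * A σ k j * (if i = k then s i else 0)
      = s j - p j [] ^ 2 := (hasSum_fintype _).unique h5
  have hsimp : ∀ (σ : Γ) (i : Fin n),
      ∑ k, A σ i j * A σ k j * (if i = k then s i else 0) = s i * A σ i j ^ 2 := by
    intro σ i
    rw [Finset.sum_eq_single i]
    · simp [pow_two]; ring
    · intro k _ hk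
      simp [if_neg (Ne.symm hk)]
    · intro h; exact absurd (Finset.mem_univ i) h
  calc ∑ i, s i * ∑ σ : Γ, A σ i j ^ 2
      = ∑ σ : Γ, ∑ i, s i * A σ i j ^ 2 := by
        rw [Finset.sum_comm]
        simp [Finset.mul_sum]
    _ = ∑ σ : Γ, ∑ i, ∑ k, A σ i j * A σ k j * (if i = k then s i else 0) := by
        refine Finset.sum_congr rfl fun σ _ => Finset.sum_congr rfl fun i _ => (hsimp σ i).symm
    _ = s j - (α₀ j) ^ 2 := by rw [h6, hnil]
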